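/- arXiv:1410.2626 — 4 statements merged into one kernel-verified Lean document; each statement's English description precedes it below -/
import Mathlib

section
/- Let R ⊆ F_m be a finite set of words and suppose the group G = F_m/⟨⟨R⟩⟩ is residually finite. Then for every sequence (n_k) of positive integers with n_k → ∞ there exist tuples (q_k^1, …, q_k^m) ∈ Sym(n_k)^m such that ξ(q_k^1, …, q_k^m) = id for every ξ ∈ R and every k, and for every word ξ ∈ F_m with ξ ∉ ⟨⟨R⟩⟩ one has lim_{k→∞} d_H(ξ(q_k^1, …, q_k^m), id) = 1. -/
open Filter Topology

/-- The normalized Hamming distance between two permutations of `Fin n`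
(interpreted as `0` when `n = 0`). -/
noncomputable def dH {n : ℕ} (p q : Equiv.Perm (Fin n)) : ℝ :=
  ((Finset.univ.filter fun i => p i ≠ q i).card : ℝ) / n

/-- Evaluation of a word `ξ` of the free group on `m` generators at a tuple of
elements of a group `H`. -/
def evalWord {m : ℕ} {H : Type*} [Group H] (ξ : FreeGroup (Fin m)) (p : Fin m → H) : H :=
  FreeGroup.lift p ξ

/-- A group is residually finite if every nontrivial element survives in some
homomorphism to a finite group. -/
def ResiduallyFinite (G : Type*) [Group G] : Prop :=
  ∀ g : G, g ≠ 1 → ∃ (F : Type) (_ : Group F) (_ : Finite F) (φ : G →* F), φ g ≠ 1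

lemma dH_le_one {n : ℕ} (p q : Equiv.Perm (Fin n)) : dH p q ≤ 1 := by
  unfold dH
  rcases Nat.eq_zero_or_pos n with h | h
  · simp [h]
  · rw [div_le_one (by exact_mod_cast h)]
    exact_mod_cast (Finset.card_filter_le _ _).trans_eq (Finset.card_fin n)

lemma exists_block_hom (A : Type) [Fintype A] [Nonempty A] (n : ℕ) (hn : 0 < n) :
    ∃ Θ : Equiv.Perm A →* Equiv.Perm (Fin n),
      ∀ σ : Equiv.Perm A, (∀ a, σ a ≠ a) →
        1 - (Fintype.card A : ℝ) / n ≤ dH (Θ σ) 1 := by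
  classical
  set c := Fintype.card A with hc
  have hcpos : 0 < c := Fintype.card_pos
  have hcard : Fintype.card (Fin n) = Fintype.card ((Fin (n / c) × A) ⊕ Fin (n % c)) := by
    simp only [Fintype.card_sum, Fintype.card_prod, Fintype.card_fin]
    rw [mul_comm, ← hc, Nat.div_add_mod]
  let E : Fin n ≃ (Fin (n / c) × A) ⊕ Fin (n % c) := Fintype.equivOfCardEq hcard
  let ΘA : Equiv.Perm A →* Equiv.Perm ((Fin (n / c) × A) ⊕ Fin (n % c)) :=
    { toFun := fun σ => Equiv.sumCongr (Equiv.prodCongr (Equiv.refl _) σ) (Equiv.refl _)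
      map_one' := by ext x; rcases x with ⟨a, b⟩ | r <;> rfl
      map_mul' := by intro σ τ; ext x; rcases x with ⟨a, b⟩ | r <;> rfl }
  refine ⟨{ toFun := fun σ => (E.symm.permCongr) (ΘA σ)
            map_one' := by
              ext i
              simp [Equiv.permCongr_apply]
            map_mul' := by
              intro σ τ
              ext i
              simp [Equiv.permCongr_apply, Equiv.Perm.mul_apply] }, ?_⟩
  intro σ hσ
  set P : Equiv.Perm (Fin n) := (E.symm.permCongr) (ΘA σ) with hP
  have hfix : (Finset.univ.filter fun i => P i = i).card ≤ n % c := by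
    have hsub : (Finset.univ.filter fun i => P i = i) ⊆
        Finset.univ.image (fun r : Fin (n % c) => E.symm (Sum.inr r)) := by
      intro i hi
      simp only [Finset.mem_filter, Finset.mem_univ, true_and] at hi
      have hi' : ΘA σ (E i) = E i := by
        have : E.symm (ΘA σ (E i)) = i := hi
        have := congrArg E this
        simpa using this
      rcases hE : E i with ⟨a, b⟩ | r
      · exfalso
        rw [hE] at hi'
        have : σ b = b := by
          have := hi'
          simp [ΘA, Equiv.sumCongr_apply] at this
          exact this
        exact hσ b this
      · simp only [Finset.mem_image, Finset.mem_univ, true_and]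
        exact ⟨r, by rw [← hE]; simp⟩
    calc (Finset.univ.filter fun i => P i = i).card
        ≤ _ := Finset.card_le_card hsub
      _ ≤ (Finset.univ : Finset (Fin (n % c))).card := Finset.card_image_le
      _ = n % c := by simp
  have hsplit : (Finset.univ.filter fun i => P i ≠ i).card
      = n - (Finset.univ.filter fun i => P i = i).card := by
    have := Finset.card_filter_add_card_filter_not
      (s := (Finset.univ : Finset (Fin n))) (p := fun i => P i = i)
    simp only [ne_eq, Finset.card_fin] at this ⊢
    omega
  have hfixn : (Finset.univ.filter fun i => P i = i).card ≤ n := by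
    exact (Finset.card_filter_le _ _).trans_eq (Finset.card_fin n)
  show 1 - (c : ℝ) / n ≤ dH P 1
  unfold dH
  simp only [Equiv.Perm.one_apply]
  change 1 - (c : ℝ) / n ≤ ((Finset.univ.filter fun i => P i ≠ i).card : ℝ) / n
  rw [hsplit]
  have h1 : ((Finset.univ.filter fun i => P i = i).card : ℝ) ≤ c := by
    exact_mod_cast hfix.trans (Nat.mod_lt n hcpos).le
  rw [Nat.cast_sub hfixn, sub_div, div_self (by exact_mod_cast hn.ne')]
  gcongr

lemma freeGroup_countable {α : Type*} [Countable α] : Countable (FreeGroup α) := by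
  classical
  exact Function.Injective.countable FreeGroup.toWord_injective

lemma exists_sep_action {m : ℕ} (N : Subgroup (FreeGroup (Fin m))) [N.Normal]
    (hrf : ResiduallyFinite (FreeGroup (Fin m) ⧸ N)) (w : FreeGroup (Fin m)) :
    ∃ (A : Type) (_ : Fintype A) (_ : Nonempty A)
      (ρ : (FreeGroup (Fin m) ⧸ N) →* Equiv.Perm A),
      w ∉ N → ∀ a, ρ (QuotientGroup.mk' N w) a ≠ a := by
  by_cases h : w ∈ N
  · exact ⟨Unit, inferInstance, inferInstance, 1, fun h' => absurd h h'⟩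
  · have hne : QuotientGroup.mk' N w ≠ 1 := by
      simpa [QuotientGroup.eq_one_iff] using h
    obtain ⟨F, _, _, φ, hφ⟩ := hrf _ hne
    refine ⟨F, Fintype.ofFinite F, ⟨1⟩, (MulAction.toPermHom F F).comp φ,
      fun _ a ha => hφ ?_⟩
    have h1 : φ (QuotientGroup.mk' N w) * a = 1 * a := by
      simpa [MulAction.toPermHom_apply, smul_eq_mul] using ha
    exact mul_right_cancel h1


/-- A residually finite presented group admits a perfect sofic representation
on any sequence of dimensions tending to infinity. -/
theorem residually_finite_perfect_representation (m : ℕ)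
    (R : Finset (FreeGroup (Fin m)))
    (hrf : ResiduallyFinite
      (FreeGroup (Fin m) ⧸ Subgroup.normalClosure (R : Set (FreeGroup (Fin m)))))
    (nk : ℕ → ℕ) (hpos : ∀ k, 0 < nk k)
    (hnk : Filter.Tendsto nk Filter.atTop Filter.atTop) :
    ∃ q : (k : ℕ) → Fin m → Equiv.Perm (Fin (nk k)),
      (∀ k, ∀ ξ ∈ R, evalWord ξ (q k) = 1) ∧
      ∀ ξ : FreeGroup (Fin m),
        ξ ∉ Subgroup.normalClosure (R : Set (FreeGroup (Fin m))) →
        Filter.Tendsto (fun k => dH (evalWord ξ (q k)) 1) Filter.atTop (nhds 1) := by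
  classical
  set N := Subgroup.normalClosure (R : Set (FreeGroup (Fin m))) with hNdef
  haveI : N.Normal := Subgroup.normalClosure_normal
  haveI : Countable (FreeGroup (Fin m)) := freeGroup_countable
  obtain ⟨e, he⟩ := exists_surjective_nat (FreeGroup (Fin m))
  choose A instF instN ρ hρ using fun j => exists_sep_action N hrf (e j)
  let B : ℕ → Type := fun s => (j : Fin s) → A j
  let instB : ∀ s, Fintype (B s) := fun s => @Pi.instFintype _ _ _ _ (fun j => instF j)
  let instNB : ∀ s, Nonempty (B s) := fun s => ⟨fun j => (instN j).some⟩
  let ρB : ∀ s, (FreeGroup (Fin m) ⧸ N) →* Equiv.Perm (B s) := fun s =>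
    { toFun := fun g => Equiv.piCongrRight fun j => ρ j g
      map_one' := Equiv.ext fun b => funext fun j => by
        simp [Equiv.piCongrRight]
      map_mul' := fun g h => Equiv.ext fun b => funext fun j => by
        simp [Equiv.piCongrRight, Equiv.Perm.mul_apply] }
  let c : ℕ → ℕ := fun s => @Fintype.card (B s) (instB s)
  have hc0 : c 0 = 1 := (@Fintype.card_eq_one_iff _ (instB 0)).mpr
    ⟨fun j => j.elim0, fun y => funext fun j => j.elim0⟩
  let P : ℕ → ℕ → Prop := fun k s => c s * (s + 1) ≤ nk k
  let sk : ℕ → ℕ := fun k => Nat.findGreatest (P k) k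
  have hP0 : ∀ k, P k 0 := fun k => by simpa [P, hc0] using Nat.one_le_iff_ne_zero.mpr (hpos k).ne'
  have hPk : ∀ k, P k (sk k) := fun k => Nat.findGreatest_spec (Nat.zero_le k) (hP0 k)
  have hsk : Tendsto sk atTop atTop := by
    rw [tendsto_atTop]
    intro s
    filter_upwards [hnk.eventually_ge_atTop (c s * (s + 1)), eventually_ge_atTop s]
      with k h1 h2
    exact Nat.le_findGreatest h2 h1
  choose Θ hΘ using fun k =>
    @exists_block_hom (B (sk k)) (instB _) (instNB _) (nk k) (hpos k)
  let π : ∀ k, FreeGroup (Fin m) →* Equiv.Perm (Fin (nk k)) := fun k =>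
    ((Θ k).comp (ρB (sk k))).comp (QuotientGroup.mk' N)
  have heval : ∀ k ξ, evalWord ξ (fun i => π k (FreeGroup.of i)) = π k ξ := fun k ξ =>
    (FreeGroup.lift_unique (π k) (fun i => rfl)).symm
  refine ⟨fun k i => π k (FreeGroup.of i), ?_, ?_⟩
  · intro k ξ hξ
    rw [heval k ξ]
    have h1 : QuotientGroup.mk' N ξ = 1 :=
      (QuotientGroup.eq_one_iff ξ).mpr (Subgroup.subset_normalClosure hξ)
    calc π k ξ = ((Θ k).comp (ρB (sk k))) (QuotientGroup.mk' N ξ) := rfl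
      _ = 1 := by rw [h1]; simp
  · intro ξ hξ
    obtain ⟨j, rfl⟩ := he ξ
    apply tendsto_of_tendsto_of_tendsto_of_le_of_le'
      (g := fun k => 1 - 1 / ((sk k : ℝ) + 1)) (h := fun _ => (1 : ℝ))
    · have h0 : Tendsto (fun k => 1 / ((sk k : ℝ) + 1)) atTop (nhds 0) :=
        tendsto_one_div_add_atTop_nhds_zero_nat.comp hsk
      simpa using tendsto_const_nhds.sub h0
    · exact tendsto_const_nhds
    · filter_upwards [hsk.eventually_gt_atTop j] with k hk
      rw [heval k]
      have hff : ∀ b : B (sk k), (ρB (sk k)) (QuotientGroup.mk' N (e j)) b ≠ b := by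
        intro b hb
        apply hρ j hξ (b ⟨j, hk⟩)
        have h2 := congrFun hb ⟨j, hk⟩
        simpa [ρB, Equiv.piCongrRight] using h2
      have hlow := hΘ k _ hff
      have hrw : π k (e j) = Θ k ((ρB (sk k)) (QuotientGroup.mk' N (e j))) := rfl
      rw [hrw]
      refine le_trans ?_ hlow
      have h2 : (c (sk k) : ℝ) / nk k ≤ 1 / ((sk k : ℝ) + 1) := by
        rw [div_le_div_iff₀ (by exact_mod_cast hpos k) (by positivity), one_mul]
        have h3 : c (sk k) * (sk k + 1) ≤ nk k := hPk k
        exact_mod_cast h3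
      linarith
    · filter_upwards with k
      rw [heval k]
      exact dH_le_one _ _
end

section
/- Let R ⊆ F_m be a finite set of words such that the group G = F_m/⟨⟨R⟩⟩ is sofic. If R is weakly stable in permutations, then G is residually finite. -/
open Filter Topology

/-- `p` is a `δ`-strong solution of `R`. -/
def IsStrongSol {m : ℕ} (R : Finset (FreeGroup (Fin m))) (δ : ℝ) {n : ℕ}
    (p : Fin m → Equiv.Perm (Fin n)) : Prop :=
  ∀ ξ : FreeGroup (Fin m), (FreeGroup.norm ξ : ℝ) < 1 / δ →
    (ξ ∈ Subgroup.normalClosure (R : Set (FreeGroup (Fin m))) →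
      dH (evalWord ξ p) 1 < δ) ∧
    (ξ ∉ Subgroup.normalClosure (R : Set (FreeGroup (Fin m))) →
      1 - δ < dH (evalWord ξ p) 1)

/-- A finite set of words `R ⊆ F_m` is weakly stable in permutations. -/
def WeaklyStable {m : ℕ} (R : Finset (FreeGroup (Fin m))) : Prop :=
  ∀ ε : ℝ, 0 < ε → ∃ δ : ℝ, 0 < δ ∧
    ∀ (n : ℕ) (p : Fin m → Equiv.Perm (Fin n)),
      IsStrongSol R δ p →
      ∃ q : Fin m → Equiv.Perm (Fin n),
        (∀ ξ ∈ R, evalWord ξ q = 1) ∧ ∀ i, dH (p i) (q i) < ε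

/-- A group is sofic: every finite subset admits `(ε)`-multiplicative,
`(1-ε)`-free maps to symmetric groups. -/
def Sofic (G : Type*) [Group G] : Prop :=
  ∀ (E : Finset G) (ε : ℝ), 0 < ε →
    ∃ n : ℕ, 0 < n ∧ ∃ φ : G → Equiv.Perm (Fin n),
      (∀ g ∈ E, ∀ h ∈ E, g * h ∈ E → dH (φ g * φ h) (φ (g * h)) < ε) ∧
      ∀ g ∈ E, g ≠ 1 → 1 - ε < dH (φ g) 1

section AuxDH

variable {n : ℕ}

lemma dH_nonneg (p q : Equiv.Perm (Fin n)) : 0 ≤ dH p q := by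
  unfold dH; positivity

lemma dH_self (p : Equiv.Perm (Fin n)) : dH p p = 0 := by
  simp [dH]

lemma dH_comm (p q : Equiv.Perm (Fin n)) : dH p q = dH q p := by
  have h : (Finset.univ.filter fun i => p i ≠ q i) = (Finset.univ.filter fun i => q i ≠ p i) := by
    ext i; simp [ne_comm]
  unfold dH; rw [h]

lemma div_le_div_nn {a b c : ℝ} (h : a ≤ b) (hc : 0 ≤ c) : a / c ≤ b / c := by
  rcases hc.eq_or_lt with rfl | hc
  · simp
  · exact (div_le_div_iff_of_pos_right hc).mpr h

lemma dH_triangle (p q r : Equiv.Perm (Fin n)) : dH p r ≤ dH p q + dH q r := by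
  unfold dH
  rw [← add_div]
  apply div_le_div_nn _ (by positivity)
  have hsub : (Finset.univ.filter fun i => p i ≠ r i) ⊆
      (Finset.univ.filter fun i => p i ≠ q i) ∪ (Finset.univ.filter fun i => q i ≠ r i) := by
    intro i hi
    simp only [Finset.mem_filter, Finset.mem_union, Finset.mem_univ, true_and] at *
    by_contra hcon
    push_neg at hcon
    exact hi (hcon.1.trans hcon.2)
  exact_mod_cast (Finset.card_le_card hsub).trans (Finset.card_union_le _ _)

lemma dH_mul_left (r p q : Equiv.Perm (Fin n)) : dH (r * p) (r * q) = dH p q := by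
  have h : (Finset.univ.filter fun i => (r * p) i ≠ (r * q) i) =
      (Finset.univ.filter fun i => p i ≠ q i) := by
    ext i; simp [Equiv.Perm.mul_apply]
  unfold dH; rw [h]

lemma dH_mul_right (p q r : Equiv.Perm (Fin n)) : dH (p * r) (q * r) = dH p q := by
  unfold dH
  congr 1
  norm_cast
  have h : (Finset.univ.filter fun i => (p * r) i ≠ (q * r) i) =
      (Finset.univ.filter fun i => p i ≠ q i).image r.symm := by
    ext i
    simp only [Finset.mem_filter, Finset.mem_image, Finset.mem_univ, true_and,
      Equiv.Perm.mul_apply]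
    constructor
    · intro hi; exact ⟨r i, by simpa using (Finset.mem_filter.mp hi).2, r.symm_apply_apply i⟩
    · rintro ⟨j, hj, rfl⟩; exact Finset.mem_filter.mpr ⟨Finset.mem_univ _, by simpa using hj⟩
  rw [h, Finset.card_image_of_injective _ r.symm.injective]

lemma dH_inv (p q : Equiv.Perm (Fin n)) : dH p⁻¹ q⁻¹ = dH p q := by
  calc dH p⁻¹ q⁻¹ = dH (q * p⁻¹) (q * q⁻¹) := (dH_mul_left _ _ _).symm
    _ = dH (q * p⁻¹) 1 := by rw [mul_inv_cancel]
    _ = dH ((q * p⁻¹) * p) (1 * p) := (dH_mul_right _ _ _).symm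
    _ = dH q p := by rw [one_mul, mul_assoc, inv_mul_cancel, mul_one]
    _ = dH p q := dH_comm _ _

lemma dH_mul_le (a b c d : Equiv.Perm (Fin n)) : dH (a * b) (c * d) ≤ dH a c + dH b d := by
  calc dH (a * b) (c * d) ≤ dH (a * b) (a * d) + dH (a * d) (c * d) := dH_triangle _ _ _
    _ = dH b d + dH a c := by rw [dH_mul_left, dH_mul_right]
    _ = dH a c + dH b d := add_comm _ _

end AuxDH

section AuxEval

variable {m n : ℕ}

/-- Evaluation of an (unreduced) word at a tuple of permutations. -/
def evalL (p : Fin m → Equiv.Perm (Fin n)) (l : List (Fin m × Bool)) : Equiv.Perm (Fin n) :=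
  (l.map fun x => cond x.2 (p x.1) (p x.1)⁻¹).prod

lemma evalL_nil (p : Fin m → Equiv.Perm (Fin n)) : evalL p [] = 1 := rfl

lemma evalL_cons (p : Fin m → Equiv.Perm (Fin n)) (a : Fin m × Bool) (t : List (Fin m × Bool)) :
    evalL p (a :: t) = (cond a.2 (p a.1) (p a.1)⁻¹) * evalL p t := by
  simp [evalL]

lemma evalWord_mk (p : Fin m → Equiv.Perm (Fin n)) (l : List (Fin m × Bool)) :
    evalWord (FreeGroup.mk l) p = evalL p l :=
  FreeGroup.lift_mk

lemma dH_evalL_evalL (p q : Fin m → Equiv.Perm (Fin n)) (ε : ℝ)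
    (h : ∀ i, dH (p i) (q i) ≤ ε) :
    ∀ l : List (Fin m × Bool), dH (evalL p l) (evalL q l) ≤ l.length * ε := by
  intro l
  induction l with
  | nil => simp [evalL_nil, dH_self]
  | cons a t ih =>
    obtain ⟨i, b⟩ := a
    have hhead : dH (cond b (p i) (p i)⁻¹) (cond b (q i) (q i)⁻¹) ≤ ε := by
      cases b
      · simpa [dH_inv] using h i
      · simpa using h i
    calc dH (evalL p ((i, b) :: t)) (evalL q ((i, b) :: t))
        ≤ dH (cond b (p i) (p i)⁻¹) (cond b (q i) (q i)⁻¹) + dH (evalL p t) (evalL q t) := by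
          rw [evalL_cons, evalL_cons]; exact dH_mul_le _ _ _ _
      _ ≤ ε + t.length * ε := add_le_add hhead ih
      _ = ((i, b) :: t).length * ε := by push_cast [List.length_cons]; ring

end AuxEval

section AuxSofic

variable {n : ℕ} {G : Type*} [Group G]

lemma dH_phi_one (φ : G → Equiv.Perm (Fin n)) (E : Finset G) (ε : ℝ)
    (hmul : ∀ g ∈ E, ∀ h ∈ E, g * h ∈ E → dH (φ g * φ h) (φ (g * h)) < ε)
    (h1E : (1 : G) ∈ E) : dH (φ 1) 1 < ε := by
  have h := hmul 1 h1E 1 h1E (by simpa using h1E)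
  rw [one_mul] at h
  have h2 := dH_mul_left (φ 1) (φ 1) 1
  rw [mul_one] at h2
  rwa [h2] at h

lemma dH_phi_inv (φ : G → Equiv.Perm (Fin n)) (E : Finset G) (ε : ℝ)
    (hmul : ∀ g ∈ E, ∀ h ∈ E, g * h ∈ E → dH (φ g * φ h) (φ (g * h)) < ε)
    (h1E : (1 : G) ∈ E) (s : G) (hs : s ∈ E) (hs' : s⁻¹ ∈ E) :
    dH (φ s)⁻¹ (φ s⁻¹) ≤ 2 * ε := by
  have e1 : dH (φ s)⁻¹ (φ s⁻¹) = dH 1 (φ s * φ s⁻¹) := by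
    have h := dH_mul_left (φ s) (φ s)⁻¹ (φ s⁻¹)
    rw [mul_inv_cancel] at h
    exact h.symm
  have hss : dH (φ s * φ s⁻¹) (φ 1) < ε := by
    have h := hmul s hs s⁻¹ hs' (by simpa using h1E)
    rwa [mul_inv_cancel] at h
  calc dH (φ s)⁻¹ (φ s⁻¹) = dH 1 (φ s * φ s⁻¹) := e1
    _ ≤ dH 1 (φ 1) + dH (φ 1) (φ s * φ s⁻¹) := dH_triangle _ _ _
    _ ≤ ε + ε := add_le_add (by rw [dH_comm]; exact (dH_phi_one φ E ε hmul h1E).le)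
        (by rw [dH_comm]; exact hss.le)
    _ = 2 * ε := by ring

end AuxSofic

lemma approx_lemma {m n L : ℕ} {G : Type*} [Group G] (π : FreeGroup (Fin m) →* G)
    (φ : G → Equiv.Perm (Fin n)) (E : Finset G) (ε : ℝ)
    (hE : ∀ ξ : FreeGroup (Fin m), ξ.norm ≤ L → π ξ ∈ E)
    (hmul : ∀ g ∈ E, ∀ h ∈ E, g * h ∈ E → dH (φ g * φ h) (φ (g * h)) < ε) :
    ∀ l : List (Fin m × Bool), l.length ≤ L →
      dH (evalL (fun i => φ (π (FreeGroup.of i))) l) (φ (π (FreeGroup.mk l)))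
        ≤ (3 * l.length + 1) * ε := by
  have h1E : (1 : G) ∈ E := by
    have h := hE 1 (by simp [FreeGroup.norm])
    simpa using h
  have hφ1 : dH (φ 1) 1 < ε := dH_phi_one φ E ε hmul h1E
  have hε : 0 ≤ ε := le_of_lt (lt_of_le_of_lt (dH_nonneg _ _) hφ1)
  intro l
  induction l with
  | nil =>
    intro _
    have e : dH (evalL (fun i => φ (π (FreeGroup.of i))) []) (φ (π (FreeGroup.mk []))) =
        dH (φ 1) 1 := by
      rw [show FreeGroup.mk ([] : List (Fin m × Bool)) = 1 from rfl, map_one, evalL_nil, dH_comm]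
    rw [e]
    simp only [List.length_nil, Nat.cast_zero]
    nlinarith [hφ1]
  | cons a t ih =>
    intro hlen
    obtain ⟨i, b⟩ := a
    set p : Fin m → Equiv.Perm (Fin n) := fun i => φ (π (FreeGroup.of i)) with hpdef
    have hL1 : 1 ≤ L := le_trans (Nat.succ_le_succ (Nat.zero_le _)) hlen
    have htlen : t.length ≤ L := le_trans (Nat.le_succ _) hlen
    have hlT : FreeGroup.mk [(i, true)] = FreeGroup.of i := rfl
    have hlF : FreeGroup.mk [(i, false)] = (FreeGroup.of i)⁻¹ := by
      rw [show FreeGroup.of i = FreeGroup.mk [(i, true)] from rfl, FreeGroup.inv_mk]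
      rfl
    have hmem1 : π (FreeGroup.of i) ∈ E := by
      have h := hE (FreeGroup.of i) (by rw [FreeGroup.norm_of]; exact hL1)
      exact h
    have hmem2 : (π (FreeGroup.of i))⁻¹ ∈ E := by
      rw [← map_inv]
      exact hE _ (by rw [FreeGroup.norm_inv_eq, FreeGroup.norm_of]; exact hL1)
    have hmemt : π (FreeGroup.mk t) ∈ E := hE _ (le_trans FreeGroup.norm_mk_le htlen)
    have hmemat : π (FreeGroup.mk ((i, b) :: t)) ∈ E :=
      hE _ (le_trans FreeGroup.norm_mk_le hlen)
    have hglet : π (FreeGroup.mk [(i, b)]) ∈ E := by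
      cases b
      · rw [hlF, map_inv]; exact hmem2
      · rw [hlT]; exact hmem1
    have hsplit : FreeGroup.mk ((i, b) :: t) = FreeGroup.mk [(i, b)] * FreeGroup.mk t := by
      rw [FreeGroup.mul_mk, List.singleton_append]
    have hhead : dH (cond b (p i) (p i)⁻¹) (φ (π (FreeGroup.mk [(i, b)]))) ≤ 2 * ε := by
      cases b
      · rw [hlF, map_inv]
        exact dH_phi_inv φ E ε hmul h1E _ hmem1 hmem2
      · rw [hlT]
        show dH (p i) (φ (π (FreeGroup.of i))) ≤ 2 * ε
        rw [hpdef, dH_self]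
        positivity
    have hmulstep : dH (φ (π (FreeGroup.mk [(i, b)])) * φ (π (FreeGroup.mk t)))
        (φ (π (FreeGroup.mk ((i, b) :: t)))) ≤ ε := by
      have h := hmul _ hglet _ hmemt (by rw [← map_mul, ← hsplit]; exact hmemat)
      rw [← map_mul, ← hsplit] at h
      exact h.le
    calc dH (evalL p ((i, b) :: t)) (φ (π (FreeGroup.mk ((i, b) :: t))))
        ≤ dH (evalL p ((i, b) :: t)) (φ (π (FreeGroup.mk [(i, b)])) * φ (π (FreeGroup.mk t)))
          + dH (φ (π (FreeGroup.mk [(i, b)])) * φ (π (FreeGroup.mk t)))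
            (φ (π (FreeGroup.mk ((i, b) :: t)))) := dH_triangle _ _ _
      _ ≤ (dH (cond b (p i) (p i)⁻¹) (φ (π (FreeGroup.mk [(i, b)])))
            + dH (evalL p t) (φ (π (FreeGroup.mk t)))) + ε := by
          apply add_le_add _ hmulstep
          rw [evalL_cons]
          exact dH_mul_le _ _ _ _
      _ ≤ (2 * ε + (3 * t.length + 1) * ε) + ε := by
          exact add_le_add (add_le_add hhead (ih htlen)) le_rfl
      _ = (3 * ((i, b) :: t).length + 1) * ε := by
          push_cast [List.length_cons]; ring


/-- If `G = F_m/⟨⟨R⟩⟩` is sofic and `R` is weakly stable, then `G` is residually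
finite. -/
theorem sofic_weakly_stable_residually_finite (m : ℕ)
    (R : Finset (FreeGroup (Fin m)))
    (hsofic : Sofic
      (FreeGroup (Fin m) ⧸ Subgroup.normalClosure (R : Set (FreeGroup (Fin m)))))
    (hws : WeaklyStable R) :
    ResiduallyFinite
      (FreeGroup (Fin m) ⧸ Subgroup.normalClosure (R : Set (FreeGroup (Fin m)))) := by
  intro g hg
  obtain ⟨w, rfl⟩ := QuotientGroup.mk'_surjective (Subgroup.normalClosure (R : Set (FreeGroup (Fin m)))) g
  set N := Subgroup.normalClosure (R : Set (FreeGroup (Fin m))) with hNdef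
  set π : FreeGroup (Fin m) →* FreeGroup (Fin m) ⧸ N := QuotientGroup.mk' N with hπdef
  have hwN : w ∉ N := by
    intro h
    exact hg (by simpa [hπdef] using (QuotientGroup.eq_one_iff w).mpr h)
  set ℓ : ℕ := FreeGroup.norm w with hℓdef
  have hℓ1 : 1 ≤ ℓ := by
    rcases Nat.eq_zero_or_pos ℓ with h0 | h
    · exfalso
      have hnil : w.toWord = [] := List.length_eq_zero_iff.mp h0
      have : w = 1 := FreeGroup.toWord_eq_nil_iff.mp hnil
      exact hwN (this ▸ Subgroup.one_mem N)
    · exact h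
  have hℓr : (1 : ℝ) ≤ ℓ := by exact_mod_cast hℓ1
  set ε₀ : ℝ := 1 / (4 * ℓ) with hε₀def
  have hε₀pos : 0 < ε₀ := by rw [hε₀def]; positivity
  obtain ⟨δ₀, hδ₀pos, hstab⟩ := hws ε₀ hε₀pos
  set δ : ℝ := min δ₀ ε₀ with hδdef
  have hδpos : 0 < δ := lt_min hδ₀pos hε₀pos
  have hδℓ : δ ≤ ε₀ := min_le_right _ _
  have hδδ₀ : δ ≤ δ₀ := min_le_left _ _
  set L : ℕ := ⌈1 / δ⌉₊ with hLdef
  have hLge : 1 / δ ≤ (L : ℝ) := Nat.le_ceil _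
  set ε : ℝ := δ / (3 * L + 3) with hεdef
  have hεpos : 0 < ε := by rw [hεdef]; positivity
  -- the finite set E
  have hSfin : {ξ : FreeGroup (Fin m) | ξ.norm ≤ L}.Finite :=
    Set.Finite.preimage (Function.Injective.injOn FreeGroup.toWord_injective)
      (List.finite_length_le _ L)
  have hEfin : (π '' {ξ : FreeGroup (Fin m) | ξ.norm ≤ L}).Finite := hSfin.image _
  obtain ⟨n, hn, φ, hmul, hfree⟩ := hsofic hEfin.toFinset ε hεpos
  have hE : ∀ ξ : FreeGroup (Fin m), ξ.norm ≤ L → π ξ ∈ hEfin.toFinset := fun ξ h =>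
    hEfin.mem_toFinset.mpr ⟨ξ, h, rfl⟩
  set p : Fin m → Equiv.Perm (Fin n) := fun i => φ (π (FreeGroup.of i)) with hpdef
  have happrox := approx_lemma π φ hEfin.toFinset ε hE hmul
  have hclose : ∀ ξ : FreeGroup (Fin m), ξ.norm ≤ L →
      dH (evalWord ξ p) (φ (π ξ)) ≤ (3 * (L : ℝ) + 1) * ε := by
    intro ξ hξ
    have e1 := evalWord_mk p ξ.toWord
    rw [FreeGroup.mk_toWord] at e1
    have h := happrox ξ.toWord hξ
    rw [FreeGroup.mk_toWord] at h
    rw [e1]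
    refine h.trans ?_
    have hcast : ((ξ.toWord.length : ℝ)) ≤ (L : ℝ) := by exact_mod_cast hξ
    nlinarith [hεpos.le]
  have hε2 : (3 * (L : ℝ) + 2) * ε < δ := by
    have h3 : (0 : ℝ) < 3 * (L : ℝ) + 3 := by positivity
    have he : (3 * (L : ℝ) + 2) * ε = (3 * (L : ℝ) + 2) * δ / (3 * (L : ℝ) + 3) := by
      rw [hεdef]; ring
    rw [he, div_lt_iff₀ h3]
    nlinarith [hδpos]
  have key : ∀ ξ : FreeGroup (Fin m), (FreeGroup.norm ξ : ℝ) < 1 / δ →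
      (ξ ∈ N → dH (evalWord ξ p) 1 < δ) ∧ (ξ ∉ N → 1 - δ < dH (evalWord ξ p) 1) := by
    intro ξ hξ
    have hξL : ξ.norm ≤ L := by
      have h : (ξ.norm : ℝ) ≤ (L : ℝ) := le_of_lt (lt_of_lt_of_le hξ hLge)
      exact_mod_cast h
    have hc := hclose ξ hξL
    constructor
    · intro hmem
      have hπ1 : π ξ = 1 := by
        rw [hπdef]
        simpa using (QuotientGroup.eq_one_iff ξ).mpr hmem
      rw [hπ1] at hc
      have h1 : dH (φ 1) 1 < ε := dH_phi_one φ hEfin.toFinset ε hmul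
        (by have h := hE 1 (by simp [FreeGroup.norm]); simpa using h)
      have htr := dH_triangle (evalWord ξ p) (φ 1) 1
      calc dH (evalWord ξ p) 1 ≤ dH (evalWord ξ p) (φ 1) + dH (φ 1) 1 := htr
        _ ≤ (3 * (L : ℝ) + 1) * ε + ε := add_le_add hc h1.le
        _ = (3 * (L : ℝ) + 2) * ε := by ring
        _ < δ := hε2
    · intro hmem
      have hπ1 : π ξ ≠ 1 := by
        intro h
        exact hmem ((QuotientGroup.eq_one_iff ξ).mp (by rw [hπdef] at h; simpa using h))
      have hf := hfree (π ξ) (hE ξ hξL) hπ1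
      have htr := dH_triangle (φ (π ξ)) (evalWord ξ p) 1
      rw [dH_comm (φ (π ξ)) (evalWord ξ p)] at htr
      linarith
  have hstrong : IsStrongSol R δ₀ p := by
    intro ξ hξ
    have h1 : (FreeGroup.norm ξ : ℝ) < 1 / δ :=
      lt_of_lt_of_le hξ (one_div_le_one_div_of_le hδpos hδδ₀)
    obtain ⟨k1, k2⟩ := key ξ h1
    exact ⟨fun h => lt_of_lt_of_le (k1 h) hδδ₀, fun h => lt_of_le_of_lt (by linarith) (k2 h)⟩
  obtain ⟨q, hqR, hqc⟩ := hstab n p hstrong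
  set ψ : FreeGroup (Fin m) →* Equiv.Perm (Fin n) := FreeGroup.lift q with hψdef
  have hker : N ≤ ψ.ker := by
    rw [hNdef]
    apply Subgroup.normalClosure_le_normal
    intro x hx
    exact MonoidHom.mem_ker.mpr (hqR x hx)
  refine ⟨Equiv.Perm (Fin n), inferInstance, inferInstance, QuotientGroup.lift N ψ hker, ?_⟩
  intro hcon
  have heval : evalWord w q = 1 := by
    have h : QuotientGroup.lift N ψ hker ((QuotientGroup.mk' N) w) = ψ w :=
      QuotientGroup.lift_mk' _ _ _
    rw [hcon] at h
    exact h.symm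
  have hwnorm : (FreeGroup.norm w : ℝ) < 1 / δ := by
    have h1 : 1 / ε₀ ≤ 1 / δ := one_div_le_one_div_of_le hδpos hδℓ
    have h2 : 1 / ε₀ = 4 * (ℓ : ℝ) := by
      rw [hε₀def, one_div_one_div]
    rw [← hℓdef]
    linarith
  have hwkey := (key w hwnorm).2 hwN
  have e1 := evalWord_mk p w.toWord
  rw [FreeGroup.mk_toWord] at e1
  have e2 := evalWord_mk q w.toWord
  rw [FreeGroup.mk_toWord] at e2
  have hlip : dH (evalWord w p) (evalWord w q) ≤ (ℓ : ℝ) * ε₀ := by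
    rw [e1, e2]
    have h := dH_evalL_evalL p q ε₀ (fun i => (hqc i).le) w.toWord
    have hlen : (w.toWord.length : ℝ) = (ℓ : ℝ) := by rw [hℓdef]; rfl
    rwa [hlen] at h
  rw [heval] at hlip
  have hℓpos : (0 : ℝ) < (ℓ : ℝ) := by linarith
  have hℓε : (ℓ : ℝ) * ε₀ = 1 / 4 := by
    rw [hε₀def]
    field_simp
  have hδ4 : δ ≤ 1 / 4 := by
    refine le_trans hδℓ ?_
    rw [hε₀def]
    apply one_div_le_one_div_of_le
    · norm_num
    · linarith
  linarith
end

section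
/- Let ω be a non-principal ultrafilter on ℕ and (n_k) a sequence of positive integers with n_k → ∞. For each j ∈ ℕ let (C_k^j)_k be a sequence of subsets C_k^j ⊆ Fin(n_k) such that (a) for all i ≠ j, lim_{k→ω} |C_k^i ∩ C_k^j| / n_k = 0, and (b) the series Σ_j (lim_{k→ω} |C_k^j| / n_k) sums to 1. Then there exist subsets A_k^j ⊆ Fin(n_k) such that for every k the family {A_k^j}_{j∈ℕ} is pairwise disjoint with ⋃_j A_k^j = Fin(n_k), and for every j, lim_{k→ω} |A_k^j Δ C_k^j| / n_k = 0 (where Δ denotes symmetric difference). -/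
open Filter Topology

/-- Bonferroni-type counting bound. -/
lemma count_aux {α : Type*} [DecidableEq α] (C : ℕ → Finset α) (N : ℕ) :
    ∑ j ∈ Finset.range N, (C j).card ≤
      ((Finset.range N).biUnion C).card +
      ∑ j ∈ Finset.range N, ∑ i ∈ Finset.range j, ((C i) ∩ (C j)).card := by
  induction N with
  | zero => simp
  | succ N ih =>
    rw [Finset.range_add_one, Finset.sum_insert Finset.notMem_range_self,
        Finset.sum_insert Finset.notMem_range_self, Finset.biUnion_insert]
    have h1 : (C N ∩ (Finset.range N).biUnion C).card
        ≤ ∑ i ∈ Finset.range N, ((C i) ∩ (C N)).card := by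
      have hsub : C N ∩ (Finset.range N).biUnion C
          ⊆ (Finset.range N).biUnion (fun i => C i ∩ C N) := by
        intro x hx
        simp only [Finset.mem_inter, Finset.mem_biUnion, Finset.mem_range] at *
        obtain ⟨hxN, i, hi, hxi⟩ := hx
        exact ⟨i, hi, hxi, hxN⟩
      exact (Finset.card_le_card hsub).trans Finset.card_biUnion_le
    have h2 := Finset.card_union_add_card_inter (C N) ((Finset.range N).biUnion C)
    omega

/-- Almost disjoint families of subsets of asymptotically full total measure can be
corrected, along a non-principal ultrafilter, to genuine partitions. -/
theorem almost_partition_near_partition (ω : Ultrafilter ℕ)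
    (hω : Filter.cofinite ≤ (ω : Filter ℕ))
    (nk : ℕ → ℕ) (hpos : ∀ k, 0 < nk k)
    (hnk : Filter.Tendsto nk Filter.atTop Filter.atTop)
    (C : ℕ → (k : ℕ) → Finset (Fin (nk k)))
    (hdisj : ∀ i j, i ≠ j →
      Filter.Tendsto (fun k => (((C i k) ∩ (C j k)).card : ℝ) / nk k)
        (ω : Filter ℕ) (nhds 0))
    (c : ℕ → ℝ)
    (hc : ∀ j, Filter.Tendsto (fun k => ((C j k).card : ℝ) / nk k)
      (ω : Filter ℕ) (nhds (c j)))
    (hsum : HasSum c 1) :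
    ∃ A : ℕ → (k : ℕ) → Finset (Fin (nk k)),
      (∀ k, (∀ i j, i ≠ j → Disjoint (A i k) (A j k)) ∧ ∀ x, ∃ j, x ∈ A j k) ∧
      ∀ j, Filter.Tendsto (fun k => ((symmDiff (A j k) (C j k)).card : ℝ) / nk k)
        (ω : Filter ℕ) (nhds 0) := by
  classical
  set A : ℕ → (k : ℕ) → Finset (Fin (nk k)) := fun j k =>
    Finset.univ.filter (fun x =>
      (x ∈ C j k ∧ ∀ i < j, x ∉ C i k) ∨ (j = 0 ∧ ∀ i, x ∉ C i k)) with hA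
  have memA : ∀ j k (x : Fin (nk k)), x ∈ A j k ↔
      ((x ∈ C j k ∧ ∀ i < j, x ∉ C i k) ∨ (j = 0 ∧ ∀ i, x ∉ C i k)) := by
    intro j k x; simp [hA]
  have hdisjA : ∀ k i j, i < j → Disjoint (A i k) (A j k) := by
    intro k i j hij
    rw [Finset.disjoint_left]
    intro x hxi hxj
    rw [memA] at hxi hxj
    rcases hxj with ⟨hxCj, hlt⟩ | ⟨hj0, _⟩
    · rcases hxi with ⟨hxCi, _⟩ | ⟨_, hall⟩
      · exact hlt i hij hxCi
      · exact hall j hxCj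
    · omega
  have hcover : ∀ k (x : Fin (nk k)), ∃ j, x ∈ A j k := by
    intro k x
    by_cases h : ∃ i, x ∈ C i k
    · refine ⟨Nat.find h, ?_⟩
      rw [memA]
      exact Or.inl ⟨Nat.find_spec h, fun i hi => Nat.find_min h hi⟩
    · refine ⟨0, ?_⟩
      rw [memA]
      exact Or.inr ⟨rfl, fun i hxi => h ⟨i, hxi⟩⟩
  have hsub1 : ∀ j, j ≠ 0 → ∀ k, symmDiff (A j k) (C j k) ⊆
      (Finset.range j).biUnion (fun i => C i k ∩ C j k) := by
    intro j hj k x hx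
    rw [Finset.mem_symmDiff] at hx
    rcases hx with ⟨hxA, hxC⟩ | ⟨hxC, hxA⟩
    · rw [memA] at hxA
      rcases hxA with ⟨h1, _⟩ | ⟨h0, _⟩
      · exact absurd h1 hxC
      · exact absurd h0 hj
    · rw [memA] at hxA
      push_neg at hxA
      obtain ⟨h1, _⟩ := hxA
      obtain ⟨i, hi, hxi⟩ := h1 hxC
      exact Finset.mem_biUnion.2 ⟨i, Finset.mem_range.2 hi,
        Finset.mem_inter.2 ⟨hxi, hxC⟩⟩
  have hsub0 : ∀ k N, symmDiff (A 0 k) (C 0 k) ⊆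
      Finset.univ \ (Finset.range N).biUnion (fun i => C i k) := by
    intro k N x hx
    rw [Finset.mem_symmDiff] at hx
    rcases hx with ⟨hxA, hxC⟩ | ⟨hxC, hxA⟩
    · rw [memA] at hxA
      rcases hxA with ⟨h1, _⟩ | ⟨_, hall⟩
      · exact absurd h1 hxC
      · simp only [Finset.mem_sdiff, Finset.mem_univ, Finset.mem_biUnion, true_and]
        push_neg
        intro i _
        exact hall i
    · exfalso
      apply hxA
      rw [memA]
      exact Or.inl ⟨hxC, fun i hi => absurd hi (Nat.not_lt_zero i)⟩
  refine ⟨A, fun k => ⟨fun i j hij => ?_, hcover k⟩, ?_⟩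
  · rcases hij.lt_or_gt with h | h
    · exact hdisjA k i j h
    · exact (hdisjA k j i h).symm
  intro j
  rcases eq_or_ne j 0 with rfl | hj
  · -- j = 0
    rw [NormedAddCommGroup.tendsto_nhds_zero]
    intro ε hε
    obtain ⟨N, hN⟩ : ∃ N, 1 - ε / 2 < ∑ i ∈ Finset.range N, c i := by
      have h' := hsum.tendsto_sum_nat.eventually
        (eventually_gt_nhds (show (1:ℝ) - ε / 2 < 1 by linarith))
      exact h'.exists
    set g : ℕ → ℝ := fun k =>
      1 - ∑ i ∈ Finset.range N, ((C i k).card : ℝ) / nk k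
        + ∑ i ∈ Finset.range N, ∑ i' ∈ Finset.range i,
            ((C i' k ∩ C i k).card : ℝ) / nk k with hg
    have hgt : Tendsto g ω (𝓝 (1 - ∑ i ∈ Finset.range N, c i + 0)) := by
      apply Tendsto.add
      · exact tendsto_const_nhds.sub (tendsto_finset_sum _ fun i _ => hc i)
      · have h0 : Tendsto (fun k => ∑ i ∈ Finset.range N, ∑ i' ∈ Finset.range i,
            ((C i' k ∩ C i k).card : ℝ) / nk k) ω
            (𝓝 (∑ i ∈ Finset.range N, ∑ i' ∈ Finset.range i, (0:ℝ))) :=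
          tendsto_finset_sum _ fun i _ => tendsto_finset_sum _ fun i' hi' =>
            hdisj i' i (Nat.ne_of_lt (Finset.mem_range.1 hi'))
        simpa using h0
    have hlim : 1 - ∑ i ∈ Finset.range N, c i + 0 < ε := by linarith
    have hev := hgt.eventually_lt_const hlim
    filter_upwards [hev] with k hk
    have hn : (0:ℝ) < nk k := by exact_mod_cast hpos k
    have hcard1 : (symmDiff (A 0 k) (C 0 k)).card
        + ((Finset.range N).biUnion (fun i => C i k)).card ≤ nk k := by
      have h1 := Finset.card_le_card (hsub0 k N)
      have h2 : (Finset.univ \ (Finset.range N).biUnion (fun i => C i k)).card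
          = nk k - ((Finset.range N).biUnion (fun i => C i k)).card := by
        rw [Finset.card_sdiff_of_subset (Finset.subset_univ _)]
        simp
      have h3 : ((Finset.range N).biUnion (fun i => C i k)).card ≤ nk k := by
        have h4 := Finset.card_le_univ ((Finset.range N).biUnion (fun i => C i k))
        simpa using h4
      omega
    have hcard2 := count_aux (fun i => C i k) N
    have e1 : ((symmDiff (A 0 k) (C 0 k)).card : ℝ)
        + (((Finset.range N).biUnion (fun i => C i k)).card : ℝ) ≤ (nk k : ℝ) := by
      exact_mod_cast hcard1
    have e2 : (∑ i ∈ Finset.range N, ((C i k).card : ℝ))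
        ≤ (((Finset.range N).biUnion (fun i => C i k)).card : ℝ)
          + ∑ i ∈ Finset.range N, ∑ i' ∈ Finset.range i,
              ((C i' k ∩ C i k).card : ℝ) := by
      exact_mod_cast hcard2
    have key : ((symmDiff (A 0 k) (C 0 k)).card : ℝ) / nk k ≤ g k := by
      simp only [hg, ← Finset.sum_div]
      rw [show (1:ℝ) = (nk k : ℝ) / nk k from (div_self hn.ne').symm,
        div_sub_div_same, ← add_div]
      gcongr
      linarith
    rw [Real.norm_eq_abs, abs_of_nonneg (by positivity)]
    exact lt_of_le_of_lt key hk
  · -- j ≠ 0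
    refine squeeze_zero (g := fun k => ∑ i ∈ Finset.range j,
        ((C i k ∩ C j k).card : ℝ) / nk k) (fun k => by positivity) (fun k => ?_) ?_
    · have h1 := Finset.card_le_card (hsub1 j hj k)
      have h2 := Finset.card_biUnion_le
        (s := Finset.range j) (t := fun i => C i k ∩ C j k)
      have hn : (0:ℝ) < nk k := by exact_mod_cast hpos k
      simp only [← Finset.sum_div]
      gcongr
      exact_mod_cast h1.trans h2
    · have h0 : Tendsto (fun k => ∑ i ∈ Finset.range j,
          ((C i k ∩ C j k).card : ℝ) / nk k) ω
          (𝓝 (∑ i ∈ Finset.range j, (0:ℝ))) :=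
        tendsto_finset_sum _ fun i hi =>
          hdisj i j (Nat.ne_of_lt (Finset.mem_range.1 hi))
      simpa using h0
end

section
/- Let ω be a non-principal ultrafilter on ℕ, (n_k) a sequence of positive integers with n_k → ∞, R ⊆ F_m a finite set of words, and (p_k^1, …, p_k^m) ∈ Sym(n_k)^m tuples with lim_{k→ω} d_H(ξ(p_k^1, …, p_k^m), id) = 0 for every ξ ∈ R. Suppose for each k a partition {A_k^j}_{j∈ℕ} of Fin(n_k) into pairwise disjoint subsets with ⋃_j A_k^j = Fin(n_k) is given, satisfying: (a) Σ_j (lim_{k→ω} |A_k^j| / n_k) = 1; (b) each block is almost invariant, i.e. lim_{k→ω} |p_k^i(A_k^j) Δ A_k^j| / n_k = 0 for all i ∈ {1, …, m} and all j; (c) for each j there exist bijections q_k^{j,i} : A_k^j → A_k^j (i = 1, …, m) such that for every k the tuple (q_k^{j,1}, …, q_k^{j,m}), viewed in the symmetric group of A_k^j, satisfies ξ(q_k^{j,1}, …, q_k^{j,m}) = id for every ξ ∈ R, and lim_{k→ω} |{x ∈ A_k^j : p_k^i(x) ≠ q_k^{j,i}(x)}| / n_k = 0 for every i. Then there exist tuples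 (q_k^1, …, q_k^m) ∈ Sym(n_k)^m with ξ(q_k^1, …, q_k^m) = id for every ξ ∈ R and every k, and lim_{k→ω} d_H(p_k^i, q_k^i) = 0 for every i. -/
open Filter Topology

section Glue

open scoped Classical

/-- The index of the block containing `x`. -/
noncomputable def blockIdx {α : Type*} (A : ℕ → Finset α) (hcov : ∀ x, ∃ j, x ∈ A j)
    (x : α) : ℕ := Nat.find (hcov x)

lemma blockIdx_mem {α : Type*} (A : ℕ → Finset α) (hcov : ∀ x, ∃ j, x ∈ A j) (x : α) :
    x ∈ A (blockIdx A hcov x) := Nat.find_spec (hcov x)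

lemma blockIdx_eq {α : Type*} (A : ℕ → Finset α) (hcov : ∀ x, ∃ j, x ∈ A j)
    (hdisj : ∀ i j, i ≠ j → Disjoint (A i) (A j)) {x : α} {j : ℕ}
    (hx : x ∈ A j) : blockIdx A hcov x = j := by
  by_contra h
  exact Finset.disjoint_left.1 (hdisj _ _ h) (blockIdx_mem A hcov x) hx

/-- The equivalence between `α` and the sigma type of the blocks. -/
noncomputable def blockEquiv {α : Type*} (A : ℕ → Finset α) (hcov : ∀ x, ∃ j, x ∈ A j)
    (hdisj : ∀ i j, i ≠ j → Disjoint (A i) (A j)) : α ≃ Σ j, {x // x ∈ A j} where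
  toFun x := ⟨blockIdx A hcov x, ⟨x, blockIdx_mem A hcov x⟩⟩
  invFun s := s.2.1
  left_inv x := rfl
  right_inv s := by
    rcases s with ⟨j, x, hx⟩
    have h : blockIdx A hcov x = j := blockIdx_eq A hcov hdisj hx
    subst h
    rfl

/-- Gluing permutations of the blocks into a permutation of `α`. -/
noncomputable def glueHom {α : Type*} (A : ℕ → Finset α) (hcov : ∀ x, ∃ j, x ∈ A j)
    (hdisj : ∀ i j, i ≠ j → Disjoint (A i) (A j)) :
    (∀ j, Equiv.Perm {x // x ∈ A j}) →* Equiv.Perm α where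
  toFun σ := ((blockEquiv A hcov hdisj).symm).permCongr (Equiv.Perm.sigmaCongrRightHom _ σ)
  map_one' := by ext x; simp
  map_mul' a b := by ext x; simp [Equiv.Perm.sigmaCongrRightHom]

lemma glueHom_apply {α : Type*} (A : ℕ → Finset α) (hcov : ∀ x, ∃ j, x ∈ A j)
    (hdisj : ∀ i j, i ≠ j → Disjoint (A i) (A j))
    (σ : ∀ j, Equiv.Perm {x // x ∈ A j}) {x : α} {j : ℕ} (hx : x ∈ A j) :
    glueHom A hcov hdisj σ x = (σ j ⟨x, hx⟩ : {x // x ∈ A j}) := by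
  have h : blockIdx A hcov x = j := blockIdx_eq A hcov hdisj hx
  show ((blockEquiv A hcov hdisj).symm
    ⟨blockIdx A hcov x, σ _ ⟨x, blockIdx_mem A hcov x⟩⟩ : α) = _
  subst h
  rfl

end Glue

/-- Cutting an asymptotic solution along an almost invariant partition: if each
block carries exact solutions asymptotically agreeing with the given almost
solution, then the almost solution is asymptotically close to a sequence of
exact solutions. -/
theorem partial_perfect_implies_perfect (m : ℕ) (R : Finset (FreeGroup (Fin m)))
    (ω : Ultrafilter ℕ) (hω : Filter.cofinite ≤ (ω : Filter ℕ))
    (nk : ℕ → ℕ) (hpos : ∀ k, 0 < nk k)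
    (hnk : Filter.Tendsto nk Filter.atTop Filter.atTop)
    (p : (k : ℕ) → Fin m → Equiv.Perm (Fin (nk k)))
    (hp : ∀ ξ ∈ R, Filter.Tendsto (fun k => dH (evalWord ξ (p k)) 1)
      (ω : Filter ℕ) (nhds 0))
    (A : ℕ → (k : ℕ) → Finset (Fin (nk k)))
    (hpart : ∀ k, (∀ i j, i ≠ j → Disjoint (A i k) (A j k)) ∧ ∀ x, ∃ j, x ∈ A j k)
    (c : ℕ → ℝ)
    (hc : ∀ j, Filter.Tendsto (fun k => ((A j k).card : ℝ) / nk k)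
      (ω : Filter ℕ) (nhds (c j)))
    (hsum : HasSum c 1)
    (hinv : ∀ (i : Fin m) (j : ℕ),
      Filter.Tendsto
        (fun k => ((symmDiff ((A j k).image (p k i)) (A j k)).card : ℝ) / nk k)
        (ω : Filter ℕ) (nhds 0))
    (q' : (j : ℕ) → (k : ℕ) → Fin m → Equiv.Perm (A j k))
    (hq'sol : ∀ j k, ∀ ξ ∈ R, evalWord ξ (q' j k) = 1)
    (hq'close : ∀ (i : Fin m) (j : ℕ),
      Filter.Tendsto
        (fun k => (((A j k).attach.filter
          fun x => p k i x.1 ≠ (q' j k i x : Fin (nk k))).card : ℝ) / nk k)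
        (ω : Filter ℕ) (nhds 0)) :
    ∃ q : (k : ℕ) → Fin m → Equiv.Perm (Fin (nk k)),
      (∀ k, ∀ ξ ∈ R, evalWord ξ (q k) = 1) ∧
      ∀ i, Filter.Tendsto (fun k => dH (p k i) (q k i)) (ω : Filter ℕ) (nhds 0) := by
  classical
  set q : (k : ℕ) → Fin m → Equiv.Perm (Fin (nk k)) :=
    fun k i => glueHom (fun j => A j k) (hpart k).2 (hpart k).1 (fun j => q' j k i) with hq
  refine ⟨q, ?_, ?_⟩
  · intro k ξ hξ
    set Φ := glueHom (fun j => A j k) (hpart k).2 (hpart k).1 with hΦ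
    set σ : Fin m → ∀ j, Equiv.Perm {x // x ∈ A j k} := fun i j => q' j k i with hσ
    have h1 : evalWord ξ (q k) = Φ (FreeGroup.lift σ ξ) := by
      refine (FreeGroup.lift_unique (Φ.comp (FreeGroup.lift σ)) (fun x => ?_)).symm
      simp [hq, hΦ, hσ]
    have h2 : FreeGroup.lift σ ξ = 1 := by
      funext j
      have h3 := FreeGroup.lift_unique (f := q' j k)
        ((Pi.evalMonoidHom (fun j => Equiv.Perm {x // x ∈ A j k}) j).comp (FreeGroup.lift σ))
        (fun x => rfl) (x := ξ)
      have h4 : (FreeGroup.lift σ ξ) j = evalWord ξ (q' j k) := h3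
      rw [h4, hq'sol j k ξ hξ]
      rfl
    rw [h1, h2, map_one]
  · intro i
    have hglue : ∀ k j (x : Fin (nk k)) (hx : x ∈ A j k),
        q k i x = (q' j k i ⟨x, hx⟩ : Fin (nk k)) := fun k j x hx =>
      glueHom_apply _ _ _ _ hx
    -- the key per-k counting inequality
    have key : ∀ (J k : ℕ), dH (p k i) (q k i) ≤
        (∑ j ∈ Finset.range J, (((A j k).attach.filter
          fun x => p k i x.1 ≠ (q' j k i x : Fin (nk k))).card : ℝ) / nk k)
        + (1 - ∑ j ∈ Finset.range J, ((A j k).card : ℝ) / nk k) := by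
      intro J k
      have npos : (0:ℝ) < nk k := by exact_mod_cast hpos k
      set U : Finset (Fin (nk k)) := (Finset.range J).biUnion (fun j => A j k) with hU
      have hUcard : U.card = ∑ j ∈ Finset.range J, (A j k).card :=
        Finset.card_biUnion (fun a _ b _ hab => (hpart k).1 a b hab)
      have hUle : U.card ≤ nk k := by
        simpa using Finset.card_le_card (Finset.subset_univ U)
      have hBle : ∀ j, ((A j k).filter fun x => p k i x ≠ q k i x).card ≤
          ((A j k).attach.filter fun x => p k i x.1 ≠ (q' j k i x : Fin (nk k))).card := by
        intro j
        apply Finset.card_le_card_of_surjOn Subtype.val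
        intro x hx
        simp only [Finset.coe_filter, Set.mem_setOf_eq, Finset.mem_filter] at hx ⊢
        refine ⟨⟨x, hx.1⟩, ⟨Finset.mem_attach _ _, ?_⟩, rfl⟩
        rw [← hglue k j x hx.1]
        exact hx.2
      have hsub : Finset.univ.filter (fun x => p k i x ≠ q k i x) ⊆
          ((Finset.range J).biUnion fun j => (A j k).filter fun x => p k i x ≠ q k i x)
          ∪ (Finset.univ \ U) := by
        intro x hx
        by_cases hxU : x ∈ U
        · rcases Finset.mem_biUnion.1 hxU with ⟨j, hj, hxa⟩
          exact Finset.mem_union_left _ (Finset.mem_biUnion.2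
            ⟨j, hj, Finset.mem_filter.2 ⟨hxa, (Finset.mem_filter.1 hx).2⟩⟩)
        · exact Finset.mem_union_right _ (Finset.mem_sdiff.2 ⟨Finset.mem_univ _, hxU⟩)
      have hnat : (Finset.univ.filter (fun x => p k i x ≠ q k i x)).card ≤
          (∑ j ∈ Finset.range J, ((A j k).attach.filter
            fun x => p k i x.1 ≠ (q' j k i x : Fin (nk k))).card) + (nk k - U.card) := by
        calc (Finset.univ.filter (fun x => p k i x ≠ q k i x)).card
            ≤ (((Finset.range J).biUnion fun j =>
                (A j k).filter fun x => p k i x ≠ q k i x)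
              ∪ (Finset.univ \ U)).card := Finset.card_le_card hsub
          _ ≤ ((Finset.range J).biUnion fun j =>
                (A j k).filter fun x => p k i x ≠ q k i x).card
              + (Finset.univ \ U).card := Finset.card_union_le _ _
          _ ≤ (∑ j ∈ Finset.range J, ((A j k).filter
                fun x => p k i x ≠ q k i x).card) + (Finset.univ \ U).card := by
              gcongr
              exact Finset.card_biUnion_le
          _ ≤ (∑ j ∈ Finset.range J, ((A j k).attach.filter
                fun x => p k i x.1 ≠ (q' j k i x : Fin (nk k))).card)
              + (Finset.univ \ U).card := by
              gcongr with j hj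
              exact hBle j
          _ = _ := by
              rw [Finset.card_sdiff_of_subset (Finset.subset_univ U)]
              simp
      have hreal : ((Finset.univ.filter (fun x => p k i x ≠ q k i x)).card : ℝ) ≤
          (∑ j ∈ Finset.range J, (((A j k).attach.filter
            fun x => p k i x.1 ≠ (q' j k i x : Fin (nk k))).card : ℝ)) + (nk k - U.card) := by
        calc ((Finset.univ.filter (fun x => p k i x ≠ q k i x)).card : ℝ)
            ≤ (((∑ j ∈ Finset.range J, ((A j k).attach.filter
                fun x => p k i x.1 ≠ (q' j k i x : Fin (nk k))).card) + (nk k - U.card) : ℕ) : ℝ) := by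
              exact_mod_cast hnat
          _ = _ := by push_cast [Nat.cast_sub hUle]; ring
      rw [dH]
      rw [div_le_iff₀ npos]
      have hcard : (∑ j ∈ Finset.range J, ((A j k).card : ℝ)) = (U.card : ℝ) := by
        rw [hUcard]; push_cast; ring
      calc ((Finset.univ.filter (fun x => p k i x ≠ q k i x)).card : ℝ)
          ≤ (∑ j ∈ Finset.range J, (((A j k).attach.filter
            fun x => p k i x.1 ≠ (q' j k i x : Fin (nk k))).card : ℝ)) + (nk k - U.card) := hreal
        _ = ((∑ j ∈ Finset.range J, (((A j k).attach.filter
            fun x => p k i x.1 ≠ (q' j k i x : Fin (nk k))).card : ℝ) / nk k)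
            + (1 - ∑ j ∈ Finset.range J, ((A j k).card : ℝ) / nk k)) * nk k := by
          rw [← Finset.sum_div, ← Finset.sum_div, hcard]
          rw [add_mul, sub_mul, div_mul_cancel₀ _ npos.ne', div_mul_cancel₀ _ npos.ne', one_mul]
    rw [Metric.tendsto_nhds]
    intro ε hε
    obtain ⟨J, hJ⟩ : ∃ J, 1 - ∑ j ∈ Finset.range J, c j < ε / 2 := by
      have h6 := hsum.tendsto_sum_nat
      have h7 : ∀ᶠ J in Filter.atTop, (1:ℝ) - ε / 2 < ∑ j ∈ Finset.range J, c j :=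
        h6.eventually_const_lt (by linarith)
      obtain ⟨J, hJ⟩ := h7.exists
      exact ⟨J, by linarith⟩
    have htend : Filter.Tendsto (fun k =>
        (∑ j ∈ Finset.range J, (((A j k).attach.filter
          fun x => p k i x.1 ≠ (q' j k i x : Fin (nk k))).card : ℝ) / nk k)
        + (1 - ∑ j ∈ Finset.range J, ((A j k).card : ℝ) / nk k)) (ω : Filter ℕ)
        (nhds ((∑ j ∈ Finset.range J, (0:ℝ)) + (1 - ∑ j ∈ Finset.range J, c j))) := by
      apply Filter.Tendsto.add
      · exact tendsto_finset_sum _ (fun j _ => hq'close i j)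
      · exact Filter.Tendsto.const_sub _ (tendsto_finset_sum _ (fun j _ => hc j))
    have hlt : (∑ j ∈ Finset.range J, (0:ℝ)) + (1 - ∑ j ∈ Finset.range J, c j) < ε := by
      rw [Finset.sum_const_zero, zero_add]
      linarith
    have h8 : ∀ᶠ k in (ω : Filter ℕ), (∑ j ∈ Finset.range J, (((A j k).attach.filter
        fun x => p k i x.1 ≠ (q' j k i x : Fin (nk k))).card : ℝ) / nk k)
        + (1 - ∑ j ∈ Finset.range J, ((A j k).card : ℝ) / nk k) < ε :=
      htend.eventually_lt_const hlt
    filter_upwards [h8] with k hk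
    rw [Real.dist_eq, sub_zero, abs_of_nonneg (by rw [dH]; positivity : (0:ℝ) ≤ dH (p k i) (q k i))]
    exact lt_of_le_of_lt (key J k) hk
end
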